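/- arXiv:2208.05221 — 3 statements merged into one kernel-verified Lean document; each statement's English description precedes it below -/
import Mathlib

section
/- Let N ≥ 3 and let φ₁, φ₂ be bounded radial functions on B_R with associated potentials U_{φ_i}(r) = ∫_0^r |S^(N-1)| s^(N-1)(s^(2-N) − r^(2-N)) |φ_i(s)|² ds. If φ₁ = φ₂ on [0, R₂], then for r ∈ (R₂, R₂ + ε), |U_{φ₁}(r) − U_{φ₂}(r)| ≤ C · r² · sup_{s ∈ (R₂, R₂+ε)} |φ₁(s) − φ₂(s)|, where C depends only on N and the bounds on φ₁, φ₂. -/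
set_option maxHeartbeats 1000000


open MeasureTheory Set intervalIntegral

/-- Lipschitz-type estimate for the nonlocal potential with respect to the density:
if `φ₁ = φ₂` on `[0, R₂]`, then on `(R₂, R₂ + ε)` one has
`|U_{φ₁}(r) - U_{φ₂}(r)| ≤ C r² sup_{(R₂, R₂+ε)} |φ₁ - φ₂|`. -/
theorem potential_lipschitz_estimate (N : ℕ) (hN : 3 ≤ N) (R R₂ ε M A : ℝ)
    (hR₂ : 0 ≤ R₂) (hε : 0 < ε) (hle : R₂ + ε ≤ R) (hM : 0 < M) (hA : 0 < A)
    (φ₁ φ₂ : ℝ → ℝ) (hm₁ : Measurable φ₁) (hm₂ : Measurable φ₂)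
    (hb₁ : ∀ s ∈ Icc 0 R, |φ₁ s| ≤ M) (hb₂ : ∀ s ∈ Icc 0 R, |φ₂ s| ≤ M)
    (heq : ∀ s ∈ Icc 0 R₂, φ₁ s = φ₂ s)
    (U₁ U₂ : ℝ → ℝ)
    (hU₁ : ∀ r, U₁ r = ∫ s in (0 : ℝ)..r,
      A * s ^ (N - 1) * (s ^ ((2 : ℝ) - N) - r ^ ((2 : ℝ) - N)) * φ₁ s ^ 2)
    (hU₂ : ∀ r, U₂ r = ∫ s in (0 : ℝ)..r,
      A * s ^ (N - 1) * (s ^ ((2 : ℝ) - N) - r ^ ((2 : ℝ) - N)) * φ₂ s ^ 2) :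
    ∃ C > 0, ∀ r ∈ Ioo R₂ (R₂ + ε),
      |U₁ r - U₂ r| ≤ C * r ^ 2 * sSup ((fun s => |φ₁ s - φ₂ s|) '' Ioo R₂ (R₂ + ε)) := by
  set D := sSup ((fun s => |φ₁ s - φ₂ s|) '' Ioo R₂ (R₂ + ε)) with hDdef
  have hsub : Ioo R₂ (R₂ + ε) ⊆ Icc 0 R := fun s hs =>
    ⟨le_trans hR₂ hs.1.le, le_trans hs.2.le hle⟩
  have hbdd : BddAbove ((fun s => |φ₁ s - φ₂ s|) '' Ioo R₂ (R₂ + ε)) := by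
    refine ⟨2 * M, ?_⟩
    rintro x ⟨s, hs, rfl⟩
    have h1 := hb₁ s (hsub hs); have h2 := hb₂ s (hsub hs)
    calc |φ₁ s - φ₂ s| ≤ |φ₁ s| + |φ₂ s| := abs_sub _ _
      _ ≤ 2 * M := by linarith
  have hmem : R₂ + ε / 2 ∈ Ioo R₂ (R₂ + ε) := ⟨by linarith, by linarith⟩
  have hD0 : 0 ≤ D :=
    le_trans (abs_nonneg _) (le_csSup hbdd ⟨R₂ + ε / 2, hmem, rfl⟩)
  have hDle : ∀ s ∈ Ioo R₂ (R₂ + ε), |φ₁ s - φ₂ s| ≤ D := fun s hs =>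
    le_csSup hbdd ⟨s, hs, rfl⟩
  refine ⟨2 * A * M, by positivity, ?_⟩
  rintro r ⟨hr1, hr2⟩
  have hr0 : 0 < r := lt_of_le_of_lt hR₂ hr1
  have hrR : r ≤ R := le_trans hr2.le hle
  -- kernel bounds
  have hK : ∀ s ∈ Ioc (0:ℝ) r,
      0 ≤ A * s ^ (N - 1) * (s ^ ((2 : ℝ) - N) - r ^ ((2 : ℝ) - N)) ∧
      A * s ^ (N - 1) * (s ^ ((2 : ℝ) - N) - r ^ ((2 : ℝ) - N)) ≤ A * r := by
    rintro s ⟨hs0, hsr⟩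
    have hker : r ^ ((2 : ℝ) - N) ≤ s ^ ((2 : ℝ) - N) :=
      Real.rpow_le_rpow_of_nonpos hs0 hsr (by
        have : (3:ℝ) ≤ (N:ℝ) := by exact_mod_cast hN
        linarith)
    have hpow : (s ^ (N - 1) : ℝ) * s ^ ((2 : ℝ) - N) = s := by
      rw [← Real.rpow_natCast s (N - 1), ← Real.rpow_add hs0]
      have : ((N - 1 : ℕ) : ℝ) = (N : ℝ) - 1 := by
        have : 1 ≤ N := by omega
        push_cast [Nat.cast_sub this]
        ring
      rw [this]
      norm_num
    have hnn : (0:ℝ) ≤ s ^ (N - 1) := pow_nonneg hs0.le _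
    constructor
    · have : 0 ≤ s ^ ((2 : ℝ) - N) - r ^ ((2 : ℝ) - N) := by linarith
      positivity
    · have h1 : A * s ^ (N - 1) * (s ^ ((2 : ℝ) - N) - r ^ ((2 : ℝ) - N)) ≤
          A * (s ^ (N - 1) * s ^ ((2 : ℝ) - N)) := by
        have hr2N : 0 ≤ r ^ ((2 : ℝ) - N) := Real.rpow_nonneg hr0.le _
        have : s ^ (N - 1) * (s ^ ((2 : ℝ) - N) - r ^ ((2 : ℝ) - N)) ≤
            s ^ (N - 1) * s ^ ((2 : ℝ) - N) := by nlinarith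
        nlinarith
      rw [hpow] at h1
      nlinarith
  -- integrability
  have hint : ∀ (φ : ℝ → ℝ), Measurable φ → (∀ s ∈ Icc 0 R, |φ s| ≤ M) →
      IntervalIntegrable (fun s => A * s ^ (N - 1) *
        (s ^ ((2 : ℝ) - N) - r ^ ((2 : ℝ) - N)) * φ s ^ 2) volume 0 r := by
    intro φ hm hb
    rw [intervalIntegrable_iff_integrableOn_Ioc_of_le hr0.le]
    have hmeas : Measurable (fun s => A * s ^ (N - 1) *
        (s ^ ((2 : ℝ) - N) - r ^ ((2 : ℝ) - N)) * φ s ^ 2) := by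
      have h1 : Measurable (fun s : ℝ => s ^ ((2:ℝ) - N)) := by measurability
      have h2 : Measurable (fun s : ℝ => s ^ (N - 1)) := by measurability
      exact ((measurable_const.mul h2).mul (h1.sub measurable_const)).mul (hm.pow measurable_const)
    refine Measure.integrableOn_of_bounded (M := A * r * M ^ 2) measure_Ioc_lt_top.ne
      hmeas.aestronglyMeasurable ?_
    filter_upwards [ae_restrict_mem measurableSet_Ioc] with s hs
    obtain ⟨hK0, hKr⟩ := hK s hs
    have hφ : |φ s| ≤ M := hb s ⟨hs.1.le, hs.2.trans hrR⟩
    have hφ2 : φ s ^ 2 ≤ M ^ 2 := by nlinarith [abs_nonneg (φ s), sq_abs (φ s), neg_abs_le (φ s), le_abs_self (φ s)]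
    rw [Real.norm_eq_abs, abs_mul, abs_of_nonneg hK0, abs_of_nonneg (sq_nonneg (φ s))]
    nlinarith [sq_nonneg (φ s)]
  have hi1 := hint φ₁ hm₁ hb₁
  have hi2 := hint φ₂ hm₂ hb₂
  rw [hU₁, hU₂, ← intervalIntegral.integral_sub hi1 hi2]
  have hbound : ∀ s ∈ Set.uIoc (0:ℝ) r,
      ‖A * s ^ (N - 1) * (s ^ ((2 : ℝ) - N) - r ^ ((2 : ℝ) - N)) * φ₁ s ^ 2 -
        A * s ^ (N - 1) * (s ^ ((2 : ℝ) - N) - r ^ ((2 : ℝ) - N)) * φ₂ s ^ 2‖ ≤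
      2 * A * M * r * D := by
    intro s hs
    rw [Set.uIoc_of_le hr0.le] at hs
    obtain ⟨hK0, hKr⟩ := hK s hs
    rw [← mul_sub, Real.norm_eq_abs, abs_mul, abs_of_nonneg hK0]
    by_cases hsR₂ : s ≤ R₂
    · rw [heq s ⟨hs.1.le, hsR₂⟩]
      simp
      positivity
    · push_neg at hsR₂
      have hsIoo : s ∈ Ioo R₂ (R₂ + ε) := ⟨hsR₂, lt_of_le_of_lt hs.2 hr2⟩
      have h1 : |φ₁ s| ≤ M := hb₁ s (hsub hsIoo)
      have h2 : |φ₂ s| ≤ M := hb₂ s (hsub hsIoo)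
      have hd := hDle s hsIoo
      have hfac : |φ₁ s ^ 2 - φ₂ s ^ 2| ≤ 2 * M * D := by
        have : φ₁ s ^ 2 - φ₂ s ^ 2 = (φ₁ s + φ₂ s) * (φ₁ s - φ₂ s) := by ring
        rw [this, abs_mul]
        have hsum : |φ₁ s + φ₂ s| ≤ 2 * M := by
          calc |φ₁ s + φ₂ s| ≤ |φ₁ s| + |φ₂ s| := abs_add_le _ _
            _ ≤ 2 * M := by linarith
        have := abs_nonneg (φ₁ s - φ₂ s)
        nlinarith
      calc A * s ^ (N - 1) * (s ^ ((2 : ℝ) - N) - r ^ ((2 : ℝ) - N)) * |φ₁ s ^ 2 - φ₂ s ^ 2|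
          ≤ (A * r) * (2 * M * D) := by
            apply mul_le_mul hKr hfac (abs_nonneg _) (by positivity)
        _ = 2 * A * M * r * D := by ring
  calc |∫ s in (0:ℝ)..r, (A * s ^ (N - 1) * (s ^ ((2 : ℝ) - N) - r ^ ((2 : ℝ) - N)) * φ₁ s ^ 2 -
        A * s ^ (N - 1) * (s ^ ((2 : ℝ) - N) - r ^ ((2 : ℝ) - N)) * φ₂ s ^ 2)|
      ≤ 2 * A * M * r * D * |r - 0| :=
        intervalIntegral.norm_integral_le_of_norm_le_const hbound
    _ = 2 * A * M * r ^ 2 * D := by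
        rw [sub_zero, abs_of_nonneg hr0.le]; ring
end

section
/- Let N ≥ 3 and let φ₁, φ₂ be positive C² radial solutions on B_R of the equations −Δφ_i + U_{φ_i} φ_i = λ φ_i (same λ > 0), with φ_i'(0) = 0, where U_{φ}(r) = ∫_0^r |S^(N-1)| s^(N-1)(s^(2-N) − r^(2-N)) |φ(s)|² ds. Then for r ∈ (0, R), (φ₁(r)/φ₂(r))' = (1/(r^(N−1) φ₂(r)²)) ∫_0^r s^(N−1) (U_{φ₁}(s) − U_{φ₂}(s)) φ₁(s) φ₂(s) ds. -/
open MeasureTheory Set intervalIntegral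

/-- Wronskian-type identity: if `φ₁, φ₂` are positive radial solutions of
`φ'' + ((N-1)/r) φ' = (U_{φᵢ}(r) - λ) φ` with `φᵢ'(0) = 0`, then
`(φ₁/φ₂)'(r) = (1/(r^{N-1} φ₂(r)²)) ∫₀ʳ s^{N-1}(U_{φ₁}(s) - U_{φ₂}(s)) φ₁(s) φ₂(s) ds`. -/
theorem wronskian_identity (N : ℕ) (hN : 3 ≤ N) (R lam A : ℝ) (hR : 0 < R) (hA : 0 < A)
    (φ₁ φ₂ φ₁' φ₂' U₁ U₂ : ℝ → ℝ)
    (hU₁ : ∀ r, U₁ r = ∫ s in (0 : ℝ)..r,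
      A * s ^ (N - 1) * (s ^ ((2 : ℝ) - N) - r ^ ((2 : ℝ) - N)) * φ₁ s ^ 2)
    (hU₂ : ∀ r, U₂ r = ∫ s in (0 : ℝ)..r,
      A * s ^ (N - 1) * (s ^ ((2 : ℝ) - N) - r ^ ((2 : ℝ) - N)) * φ₂ s ^ 2)
    (hpos₁ : ∀ r ∈ Ico 0 R, 0 < φ₁ r) (hpos₂ : ∀ r ∈ Ico 0 R, 0 < φ₂ r)
    (hφ₁c : ContinuousOn φ₁ (Icc 0 R)) (hφ₂c : ContinuousOn φ₂ (Icc 0 R))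
    (hφ₁'c : ContinuousOn φ₁' (Icc 0 R)) (hφ₂'c : ContinuousOn φ₂' (Icc 0 R))
    (hd₁ : ∀ r ∈ Ioo 0 R, HasDerivAt φ₁ (φ₁' r) r)
    (hd₂ : ∀ r ∈ Ioo 0 R, HasDerivAt φ₂ (φ₂' r) r)
    (hode₁ : ∀ r ∈ Ioo 0 R,
      HasDerivAt φ₁' ((U₁ r - lam) * φ₁ r - (N - 1) / r * φ₁' r) r)
    (hode₂ : ∀ r ∈ Ioo 0 R,
      HasDerivAt φ₂' ((U₂ r - lam) * φ₂ r - (N - 1) / r * φ₂' r) r)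
    (hneu₁ : φ₁' 0 = 0) (hneu₂ : φ₂' 0 = 0) :
    ∀ r ∈ Ioo 0 R,
      HasDerivAt (fun t => φ₁ t / φ₂ t)
        ((1 / (r ^ (N - 1) * φ₂ r ^ 2)) *
          ∫ s in (0 : ℝ)..r, s ^ (N - 1) * (U₁ s - U₂ s) * φ₁ s * φ₂ s) r := by
  obtain ⟨n, rfl⟩ : ∃ n, N = n + 3 := ⟨N - 3, by omega⟩
  have hexp : ∀ t : ℝ, 0 < t → (t : ℝ) ^ (n + 2) * t ^ ((2 : ℝ) - (↑(n + 3) : ℝ)) = t := by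
    intro t ht
    rw [← Real.rpow_natCast t (n + 2), ← Real.rpow_add ht]
    have he : ((n + 2 : ℕ) : ℝ) + ((2 : ℝ) - ↑(n + 3)) = 1 := by push_cast; ring
    rw [he, Real.rpow_one]
  -- primitives
  set F₁ : ℝ → ℝ := fun t => ∫ s in (0 : ℝ)..t, s * φ₁ s ^ 2 with hF₁def
  set F₂ : ℝ → ℝ := fun t => ∫ s in (0 : ℝ)..t, s * φ₂ s ^ 2 with hF₂def
  set G₁ : ℝ → ℝ := fun t => ∫ s in (0 : ℝ)..t, s ^ (n + 2) * φ₁ s ^ 2 with hG₁def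
  set G₂ : ℝ → ℝ := fun t => ∫ s in (0 : ℝ)..t, s ^ (n + 2) * φ₂ s ^ 2 with hG₂def
  have hIccR : uIcc (0 : ℝ) R = Icc 0 R := uIcc_of_le hR.le
  have hf₁int : IntegrableOn (fun s => s * φ₁ s ^ 2) (uIcc 0 R) volume := by
    rw [hIccR]
    exact ((continuousOn_id.mul (hφ₁c.pow 2)).mono (by norm_num)).integrableOn_compact
      isCompact_Icc
  have hf₂int : IntegrableOn (fun s => s * φ₂ s ^ 2) (uIcc 0 R) volume := by
    rw [hIccR]
    exact ((continuousOn_id.mul (hφ₂c.pow 2)).mono (by norm_num)).integrableOn_compact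
      isCompact_Icc
  have hg₁int : IntegrableOn (fun s => s ^ (n + 2) * φ₁ s ^ 2) (uIcc 0 R) volume := by
    rw [hIccR]
    exact (((continuousOn_id.pow (n + 2)).mul (hφ₁c.pow 2)).mono (by norm_num)).integrableOn_compact
      isCompact_Icc
  have hg₂int : IntegrableOn (fun s => s ^ (n + 2) * φ₂ s ^ 2) (uIcc 0 R) volume := by
    rw [hIccR]
    exact (((continuousOn_id.pow (n + 2)).mul (hφ₂c.pow 2)).mono (by norm_num)).integrableOn_compact
      isCompact_Icc
  have hF₁c : ContinuousOn F₁ (Icc 0 R) := hIccR ▸ continuousOn_primitive_interval hf₁int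
  have hF₂c : ContinuousOn F₂ (Icc 0 R) := hIccR ▸ continuousOn_primitive_interval hf₂int
  have hG₁c : ContinuousOn G₁ (Icc 0 R) := hIccR ▸ continuousOn_primitive_interval hg₁int
  have hG₂c : ContinuousOn G₂ (Icc 0 R) := hIccR ▸ continuousOn_primitive_interval hg₂int
  -- closed form for U₁, U₂
  have closed : ∀ (φ : ℝ → ℝ), ContinuousOn φ (Icc 0 R) → ∀ t ∈ Ioc (0:ℝ) R,
      (∫ s in (0 : ℝ)..t,
        A * s ^ (n + 3 - 1) * (s ^ ((2 : ℝ) - ↑(n + 3)) - t ^ ((2 : ℝ) - ↑(n + 3))) * φ s ^ 2)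
      = A * (∫ s in (0 : ℝ)..t, s * φ s ^ 2)
        - A * t ^ ((2 : ℝ) - ↑(n + 3)) * ∫ s in (0 : ℝ)..t, s ^ (n + 2) * φ s ^ 2 := by
    intro φ hφ t ht
    have hsub : uIcc (0 : ℝ) t ⊆ Icc 0 R := by
      rw [uIcc_of_le ht.1.le]; exact Icc_subset_Icc le_rfl ht.2
    have h1 : IntervalIntegrable (fun s => A * (s * φ s ^ 2)) volume 0 t :=
      (continuousOn_const.mul (continuousOn_id.mul ((hφ.mono hsub).pow 2))).intervalIntegrable
    have h2 : IntervalIntegrable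
        (fun s => (A * t ^ ((2 : ℝ) - ↑(n + 3))) * (s ^ (n + 2) * φ s ^ 2)) volume 0 t :=
      (continuousOn_const.mul ((continuousOn_id.pow (n + 2)).mul
        ((hφ.mono hsub).pow 2))).intervalIntegrable
    have hcongr : (∫ s in (0 : ℝ)..t,
        A * s ^ (n + 3 - 1) * (s ^ ((2 : ℝ) - ↑(n + 3)) - t ^ ((2 : ℝ) - ↑(n + 3))) * φ s ^ 2)
        = ∫ s in (0 : ℝ)..t, (A * (s * φ s ^ 2)
          - (A * t ^ ((2 : ℝ) - ↑(n + 3))) * (s ^ (n + 2) * φ s ^ 2)) := by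
      apply intervalIntegral.integral_congr
      intro s hs
      rw [uIcc_of_le ht.1.le] at hs
      have hz1 : (0 : ℝ) ^ (n + 3 - 1) = 0 := zero_pow (by omega)
      have hz2 : (0 : ℝ) ^ (n + 2) = 0 := zero_pow (by omega)
      rcases eq_or_lt_of_le hs.1 with h0 | h0
      · show A * s ^ (n + 3 - 1) * (s ^ ((2 : ℝ) - ↑(n + 3)) - t ^ ((2 : ℝ) - ↑(n + 3))) * φ s ^ 2
          = A * (s * φ s ^ 2) - (A * t ^ ((2 : ℝ) - ↑(n + 3))) * (s ^ (n + 2) * φ s ^ 2)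
        rw [← h0, hz1, hz2]
        ring
      · have e3 : (s : ℝ) ^ (n + 3 - 1) * s ^ ((2 : ℝ) - (↑(n + 3) : ℝ)) = s := hexp s h0
        show A * s ^ (n + 3 - 1) * (s ^ ((2 : ℝ) - ↑(n + 3)) - t ^ ((2 : ℝ) - ↑(n + 3))) * φ s ^ 2
          = A * (s * φ s ^ 2) - (A * t ^ ((2 : ℝ) - ↑(n + 3))) * (s ^ (n + 2) * φ s ^ 2)
        have hnn : (s : ℝ) ^ (n + 3 - 1) = s ^ (n + 2) := rfl
        rw [hnn] at e3 ⊢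
        linear_combination (A * φ s ^ 2) * e3
    rw [hcongr, intervalIntegral.integral_sub h1 h2, intervalIntegral.integral_const_mul,
      intervalIntegral.integral_const_mul]
  have hU₁' : ∀ t ∈ Ioc (0:ℝ) R, U₁ t = A * F₁ t - A * t ^ ((2 : ℝ) - ↑(n + 3)) * G₁ t := by
    intro t ht; rw [hU₁ t]; exact closed φ₁ hφ₁c t ht
  have hU₂' : ∀ t ∈ Ioc (0:ℝ) R, U₂ t = A * F₂ t - A * t ^ ((2 : ℝ) - ↑(n + 3)) * G₂ t := by
    intro t ht; rw [hU₂ t]; exact closed φ₂ hφ₂c t ht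
  -- the Wronskian
  set W : ℝ → ℝ := fun t => t ^ (n + 2) * (φ₁' t * φ₂ t - φ₁ t * φ₂' t) with hWdef
  have hWderiv : ∀ t ∈ Ioo (0:ℝ) R,
      HasDerivAt W (t ^ (n + 2) * (U₁ t - U₂ t) * φ₁ t * φ₂ t) t := by
    intro t ht
    have htpow : HasDerivAt (fun x : ℝ => x ^ (n + 2)) ((n + 2 : ℕ) * t ^ (n + 1)) t := by
      simpa using hasDerivAt_pow (n + 2) t
    have ht0 : (t : ℝ) ≠ 0 := ne_of_gt ht.1
    have hWd := htpow.mul (((hode₁ t ht).mul (hd₂ t ht)).sub ((hd₁ t ht).mul (hode₂ t ht)))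
    have heq : t ^ (n + 2) * (U₁ t - U₂ t) * φ₁ t * φ₂ t
        = ((n + 2 : ℕ) : ℝ) * t ^ (n + 1) * (φ₁' t * φ₂ t - φ₁ t * φ₂' t)
          + t ^ (n + 2) * ((((U₁ t - lam) * φ₁ t - (↑(n + 3) - 1) / t * φ₁' t) * φ₂ t
              + φ₁' t * φ₂' t)
            - (φ₁' t * φ₂' t
              + φ₁ t * ((U₂ t - lam) * φ₂ t - (↑(n + 3) - 1) / t * φ₂' t))) := by
      field_simp
      push_cast
      ring
    rw [hWdef, heq]
    exact hWd
  have hWcont : ContinuousOn W (Icc 0 R) :=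
    (continuousOn_id.pow (n + 2)).mul ((hφ₁'c.mul hφ₂c).sub (hφ₁c.mul hφ₂'c))
  -- now fix r
  intro r hr
  have hr0 : (0:ℝ) < r := hr.1
  have hrR : r < R := hr.2
  have hincl : Icc (0:ℝ) r ⊆ Icc 0 R := Icc_subset_Icc le_rfl hrR.le
  -- the continuous representative of the integrand
  set g : ℝ → ℝ := fun s => s ^ (n + 3 - 1) * (U₁ s - U₂ s) * φ₁ s * φ₂ s with hgdef
  set h : ℝ → ℝ := fun s => A * (s ^ (n + 2) * (F₁ s - F₂ s) - s * (G₁ s - G₂ s))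
    * φ₁ s * φ₂ s with hhdef
  have hEq : EqOn g h (Icc 0 r) := by
    intro s hs
    have hz1 : (0 : ℝ) ^ (n + 3 - 1) = 0 := zero_pow (by omega)
    have hz2 : (0 : ℝ) ^ (n + 2) = 0 := zero_pow (by omega)
    rcases eq_or_lt_of_le hs.1 with h0 | h0
    · show s ^ (n + 3 - 1) * (U₁ s - U₂ s) * φ₁ s * φ₂ s
        = A * (s ^ (n + 2) * (F₁ s - F₂ s) - s * (G₁ s - G₂ s)) * φ₁ s * φ₂ s
      rw [← h0, hz1, hz2]
      ring
    · have hsR : s ∈ Ioc (0:ℝ) R := ⟨h0, hs.2.trans hrR.le⟩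
      have e1 := hU₁' s hsR
      have e2 := hU₂' s hsR
      have e3 : (s : ℝ) ^ (n + 3 - 1) * s ^ ((2 : ℝ) - (↑(n + 3) : ℝ)) = s := hexp s h0
      show s ^ (n + 3 - 1) * (U₁ s - U₂ s) * φ₁ s * φ₂ s
        = A * (s ^ (n + 2) * (F₁ s - F₂ s) - s * (G₁ s - G₂ s)) * φ₁ s * φ₂ s
      rw [e1, e2]
      have hnn : (s : ℝ) ^ (n + 3 - 1) = s ^ (n + 2) := rfl
      rw [hnn] at e3 ⊢
      linear_combination (-(A * (G₁ s - G₂ s) * φ₁ s * φ₂ s)) * e3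
  have hhcont : ContinuousOn h (Icc 0 r) := by
    apply ContinuousOn.mul
    apply ContinuousOn.mul
    · exact (continuousOn_const.mul (((continuousOn_id.pow (n + 2)).mul
        ((hF₁c.mono hincl).sub (hF₂c.mono hincl))).sub
        (continuousOn_id.mul ((hG₁c.mono hincl).sub (hG₂c.mono hincl))))).congr (fun x hx => rfl)
    · exact hφ₁c.mono hincl
    · exact hφ₂c.mono hincl
  have hgint : IntervalIntegrable g volume 0 r := by
    have : IntervalIntegrable h volume 0 r := by
      apply ContinuousOn.intervalIntegrable
      rwa [uIcc_of_le hr0.le]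
    rw [intervalIntegrable_iff_integrableOn_Icc_of_le hr0.le] at this ⊢
    exact this.congr_fun (fun x hx => (hEq hx).symm) measurableSet_Icc
  have hftc : (∫ s in (0:ℝ)..r, g s) = W r - W 0 := by
    apply intervalIntegral.integral_eq_sub_of_hasDeriv_right_of_le hr0.le
      (hWcont.mono hincl) _ hgint
    intro x hx
    have hx' : x ∈ Ioo (0:ℝ) R := ⟨hx.1, hx.2.trans hrR⟩
    have hgx := hWderiv x hx'
    have hg : g x = x ^ (n + 2) * (U₁ x - U₂ x) * φ₁ x * φ₂ x := rfl
    rw [hg]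
    exact hgx.hasDerivWithinAt
  have hW0 : W 0 = 0 := by
    have hz2 : (0 : ℝ) ^ (n + 2) = 0 := zero_pow (by omega)
    simp [hWdef, hz2]
  have hφ₂pos : 0 < φ₂ r := hpos₂ r ⟨hr0.le, hrR⟩
  have hφ₂ne : φ₂ r ≠ 0 := ne_of_gt hφ₂pos
  have hdiv := (hd₁ r hr).div (hd₂ r hr) hφ₂ne
  refine hdiv.congr_deriv ?_
  symm
  rw [hftc, hW0, sub_zero]
  have hb : W r = r ^ (n + 3 - 1) * (φ₁' r * φ₂ r - φ₁ r * φ₂' r) := rfl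
  rw [hb]
  have hrpow : (r : ℝ) ^ (n + 3 - 1) ≠ 0 := pow_ne_zero _ (ne_of_gt hr0)
  field_simp
end

section
/- Let N ≥ 3 and let φ₁, φ₂ be positive C² radial solutions on B_R of −Δφ_i + U_{φ_i} φ_i = λ φ_i with φ_i'(0) = 0 and U_{φ} as in the paper (monotone increasing in φ pointwise: φ₁ ≥ φ₂ on [0,r] implies U_{φ₁}(r) ≥ U_{φ₂}(r)). If φ₁(0) > φ₂(0), then φ₁(r) > φ₂(r) for all r ∈ [0, R). -/
open MeasureTheory Set intervalIntegral

/-- Comparison: two positive radial solutions of `φ'' + ((N-1)/r)φ' = (U_φ(r) - λ)φ` with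
`φᵢ'(0) = 0` and `φ₁(0) > φ₂(0)` satisfy `φ₁ > φ₂` on `[0, R)`. -/
theorem positive_solution_comparison (N : ℕ) (hN : 3 ≤ N) (R lam A : ℝ) (hR : 0 < R)
    (hA : 0 < A) (φ₁ φ₂ φ₁' φ₂' U₁ U₂ : ℝ → ℝ)
    (hU₁ : ∀ r, U₁ r = ∫ s in (0 : ℝ)..r,
      A * s ^ (N - 1) * (s ^ ((2 : ℝ) - N) - r ^ ((2 : ℝ) - N)) * φ₁ s ^ 2)
    (hU₂ : ∀ r, U₂ r = ∫ s in (0 : ℝ)..r,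
      A * s ^ (N - 1) * (s ^ ((2 : ℝ) - N) - r ^ ((2 : ℝ) - N)) * φ₂ s ^ 2)
    (hpos₁ : ∀ r ∈ Ico 0 R, 0 < φ₁ r) (hpos₂ : ∀ r ∈ Ico 0 R, 0 < φ₂ r)
    (hφ₁c : ContinuousOn φ₁ (Icc 0 R)) (hφ₂c : ContinuousOn φ₂ (Icc 0 R))
    (hφ₁'c : ContinuousOn φ₁' (Icc 0 R)) (hφ₂'c : ContinuousOn φ₂' (Icc 0 R))
    (hd₁ : ∀ r ∈ Ioo 0 R, HasDerivAt φ₁ (φ₁' r) r)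
    (hd₂ : ∀ r ∈ Ioo 0 R, HasDerivAt φ₂ (φ₂' r) r)
    (hode₁ : ∀ r ∈ Ioo 0 R,
      HasDerivAt φ₁' ((U₁ r - lam) * φ₁ r - (N - 1) / r * φ₁' r) r)
    (hode₂ : ∀ r ∈ Ioo 0 R,
      HasDerivAt φ₂' ((U₂ r - lam) * φ₂ r - (N - 1) / r * φ₂' r) r)
    (hneu₁ : φ₁' 0 = 0) (hneu₂ : φ₂' 0 = 0)
    (h0 : φ₂ 0 < φ₁ 0) :
    ∀ r ∈ Ico 0 R, φ₂ r < φ₁ r := by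
  obtain ⟨m, rfl⟩ : ∃ m, N = m + 2 := ⟨N - 2, by omega⟩
  have hm1 : m + 2 - 1 = m + 1 := by omega
  have hcast : ((m + 2 : ℕ) : ℝ) - 1 = (m : ℝ) + 1 := by push_cast; ring
  have hexp : ((2 : ℝ) - (m + 2 : ℕ)) ≤ 0 := by push_cast; linarith
  intro r hr
  by_contra hcon
  push_neg at hcon
  -- the set of touching points
  set K : Set ℝ := Icc 0 r ∩ (Icc 0 R ∩ (fun s => φ₁ s - φ₂ s) ⁻¹' Iic 0) with hK
  have hrR : r ≤ R := hr.2.le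
  have hKclosed : IsClosed K :=
    isClosed_Icc.inter ((hφ₁c.sub hφ₂c).preimage_isClosed_of_isClosed isClosed_Icc isClosed_Iic)
  have hrK : r ∈ K := ⟨⟨hr.1, le_refl r⟩, ⟨hr.1, hrR⟩, by simp [sub_nonpos.2 hcon]⟩
  have hbdd : BddBelow K := ⟨0, fun s hs => hs.1.1⟩
  set r₀ : ℝ := sInf K with hr₀def
  have hr₀K : r₀ ∈ K := hKclosed.csInf_mem ⟨r, hrK⟩ hbdd
  have hr₀le : φ₁ r₀ ≤ φ₂ r₀ := by
    have := hr₀K.2.2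
    simpa [sub_nonpos] using this
  have hr₀0 : 0 ≤ r₀ := hr₀K.1.1
  have hr₀r : r₀ ≤ r := hr₀K.1.2
  have hr₀R : r₀ < R := lt_of_le_of_lt hr₀r hr.2
  have hr₀pos : 0 < r₀ := by
    rcases hr₀0.lt_or_eq with h | h
    · exact h
    · exfalso; rw [← h] at hr₀le; linarith
  have hsub : Icc (0 : ℝ) r₀ ⊆ Icc 0 R := Icc_subset_Icc le_rfl hr₀R.le
  have hsubIco : Icc (0 : ℝ) r₀ ⊆ Ico 0 R := fun t ht => ⟨ht.1, lt_of_le_of_lt ht.2 hr₀R⟩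
  -- strict inequality before r₀
  have hlt : ∀ s ∈ Ico (0 : ℝ) r₀, φ₂ s < φ₁ s := by
    intro s hs
    by_contra h
    push_neg at h
    have hsK : s ∈ K := ⟨⟨hs.1, le_trans hs.2.le hr₀r⟩,
      ⟨hs.1, le_trans hs.2.le hr₀R.le⟩, by simp [sub_nonpos.2 h]⟩
    exact absurd (csInf_le hbdd hsK) (not_le.2 hs.2)
  -- rewrite the potential integrand into a continuous form
  have hrw : ∀ (φ : ℝ → ℝ) (t : ℝ), 0 < t →
      (∫ s in (0 : ℝ)..t, A * s ^ (m + 2 - 1) * (s ^ ((2 : ℝ) - (m + 2 : ℕ))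
          - t ^ ((2 : ℝ) - (m + 2 : ℕ))) * φ s ^ 2)
        = ∫ s in (0 : ℝ)..t,
            A * (s - s ^ (m + 1) * t ^ ((2 : ℝ) - (m + 2 : ℕ))) * φ s ^ 2 := by
    intro φ t ht
    apply intervalIntegral.integral_congr
    intro s hs
    rw [uIcc_of_le ht.le] at hs
    rcases eq_or_lt_of_le hs.1 with h | h
    · rw [hm1, ← h]
      simp
    · have key : (s : ℝ) ^ (m + 1) * s ^ ((2 : ℝ) - (m + 2 : ℕ)) = s := by
        rw [← Real.rpow_natCast s (m + 1), ← Real.rpow_add h]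
        push_cast
        norm_num
      rw [hm1]
      dsimp only
      linear_combination (A * φ s ^ 2) * key
  have hfactnn : ∀ t : ℝ, 0 < t → ∀ s ∈ Icc (0 : ℝ) t,
      0 ≤ A * (s - s ^ (m + 1) * t ^ ((2 : ℝ) - (m + 2 : ℕ))) := by
    intro t ht s hs
    rcases eq_or_lt_of_le hs.1 with h | h
    · rw [← h]; simp
    · have h1 : t ^ ((2 : ℝ) - (m + 2 : ℕ)) ≤ s ^ ((2 : ℝ) - (m + 2 : ℕ)) :=
        Real.rpow_le_rpow_of_nonpos h hs.2 hexp
      have h2 : s ^ (m + 1) * t ^ ((2 : ℝ) - (m + 2 : ℕ))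
          ≤ s ^ (m + 1) * s ^ ((2 : ℝ) - (m + 2 : ℕ)) :=
        mul_le_mul_of_nonneg_left h1 (pow_nonneg h.le _)
      have key : (s : ℝ) ^ (m + 1) * s ^ ((2 : ℝ) - (m + 2 : ℕ)) = s := by
        rw [← Real.rpow_natCast s (m + 1), ← Real.rpow_add h]
        push_cast
        norm_num
      rw [key] at h2
      have : 0 ≤ s - s ^ (m + 1) * t ^ ((2 : ℝ) - (m + 2 : ℕ)) := by linarith
      exact mul_nonneg hA.le this
  -- integrability of the rewritten integrand
  have hintble : ∀ (φ : ℝ → ℝ), ContinuousOn φ (Icc 0 R) → ∀ t : ℝ, 0 < t → t ≤ R →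
      IntervalIntegrable
        (fun s => A * (s - s ^ (m + 1) * t ^ ((2 : ℝ) - (m + 2 : ℕ))) * φ s ^ 2)
        volume 0 t := by
    intro φ hφ t ht htR
    apply ContinuousOn.intervalIntegrable
    rw [uIcc_of_le ht.le]
    exact ((continuous_const.mul (continuous_id.sub
      ((continuous_pow _).mul continuous_const))).continuousOn).mul
      ((hφ.mono (Icc_subset_Icc le_rfl htR)).pow 2)
  -- monotonicity of the potential in the density
  have hU : ∀ t ∈ Ioo (0 : ℝ) r₀, U₂ t ≤ U₁ t := by
    intro t ht
    have htR : t ≤ R := le_trans ht.2.le hr₀R.le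
    rw [hU₁ t, hU₂ t, hrw φ₁ t ht.1, hrw φ₂ t ht.1]
    apply intervalIntegral.integral_mono_on ht.1.le
      (hintble φ₂ hφ₂c t ht.1 htR) (hintble φ₁ hφ₁c t ht.1 htR)
    intro s hs
    have hsr : s ∈ Ico (0 : ℝ) r₀ := ⟨hs.1, lt_of_le_of_lt hs.2 ht.2⟩
    have h2pos : 0 ≤ φ₂ s := (hpos₂ s (Ico_subset_Ico le_rfl hr₀R.le hsr)).le
    have hsq : φ₂ s ^ 2 ≤ φ₁ s ^ 2 := pow_le_pow_left₀ h2pos (hlt s hsr).le 2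
    exact mul_le_mul_of_nonneg_left hsq (hfactnn t ht.1 s hs)
  -- the Wronskian
  set W : ℝ → ℝ := fun t => t ^ (m + 1) * (φ₁' t * φ₂ t - φ₂' t * φ₁ t) with hWdef
  have hWd : ∀ t ∈ Ioo (0 : ℝ) R,
      HasDerivAt W (t ^ (m + 1) * ((U₁ t - U₂ t) * (φ₁ t * φ₂ t))) t := by
    intro t ht
    have ht0 : (t : ℝ) ≠ 0 := ne_of_gt ht.1
    have h := ((hode₁ t ht).mul (hd₂ t ht)).sub ((hode₂ t ht).mul (hd₁ t ht))
    have hp := hasDerivAt_pow (m + 1) t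
    have hW := hp.mul h
    refine hW.congr_deriv ?_
    symm
    rw [hcast]
    push_cast
    simp only [Pi.sub_apply, Pi.mul_apply]
    field_simp
    ring
  have hW0 : W 0 = 0 := by simp [hWdef]
  have hWcont : ContinuousOn W (Icc 0 r₀) :=
    (continuous_pow _).continuousOn.mul
      (((hφ₁'c.mono hsub).mul (hφ₂c.mono hsub)).sub ((hφ₂'c.mono hsub).mul (hφ₁c.mono hsub)))
  have hWmono : MonotoneOn W (Icc 0 r₀) := by
    apply monotoneOn_of_deriv_nonneg (convex_Icc 0 r₀) hWcont
    · intro t ht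
      rw [interior_Icc] at ht
      exact (hWd t ⟨ht.1, lt_trans ht.2 hr₀R⟩).differentiableAt.differentiableWithinAt
    · intro t ht
      rw [interior_Icc] at ht
      rw [(hWd t ⟨ht.1, lt_trans ht.2 hr₀R⟩).deriv]
      have h1 : 0 < φ₁ t := hpos₁ t ⟨ht.1.le, lt_trans ht.2 hr₀R⟩
      have h2 : 0 < φ₂ t := hpos₂ t ⟨ht.1.le, lt_trans ht.2 hr₀R⟩
      exact mul_nonneg (pow_nonneg ht.1.le _)
        (mul_nonneg (sub_nonneg.2 (hU t ht)) (mul_nonneg h1.le h2.le))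
  have hWnn : ∀ t ∈ Icc (0 : ℝ) r₀, 0 ≤ W t := by
    intro t ht
    have := hWmono ⟨le_rfl, hr₀0⟩ ht ht.1
    rwa [hW0] at this
  -- the quotient is monotone
  set g : ℝ → ℝ := fun t => φ₁ t / φ₂ t with hgdef
  have hgd : ∀ t ∈ Ioo (0 : ℝ) r₀, HasDerivAt g
      ((φ₁' t * φ₂ t - φ₁ t * φ₂' t) / φ₂ t ^ 2) t := by
    intro t ht
    have h2 : φ₂ t ≠ 0 := ne_of_gt (hpos₂ t ⟨ht.1.le, lt_trans ht.2 hr₀R⟩)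
    exact (hd₁ t ⟨ht.1, lt_trans ht.2 hr₀R⟩).div (hd₂ t ⟨ht.1, lt_trans ht.2 hr₀R⟩) h2
  have hgmono : MonotoneOn g (Icc 0 r₀) := by
    apply monotoneOn_of_deriv_nonneg (convex_Icc 0 r₀)
    · exact (hφ₁c.mono hsub).div (hφ₂c.mono hsub)
        (fun t ht => ne_of_gt (hpos₂ t (hsubIco ht)))
    · intro t ht
      rw [interior_Icc] at ht
      exact (hgd t ht).differentiableAt.differentiableWithinAt
    · intro t ht
      rw [interior_Icc] at ht
      rw [(hgd t ht).deriv]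
      have htpow : 0 < t ^ (m + 1) := pow_pos ht.1 _
      have hWt : 0 ≤ W t := hWnn t ⟨ht.1.le, ht.2.le⟩
      have hq : 0 ≤ φ₁' t * φ₂ t - φ₂' t * φ₁ t := by
        by_contra h
        push_neg at h
        have : W t < 0 := mul_neg_of_pos_of_neg htpow h
        linarith
      apply div_nonneg _ (sq_nonneg _)
      linarith [hq]
  have h20 : 0 < φ₂ 0 := hpos₂ 0 ⟨le_rfl, hR⟩
  have h2r₀ : 0 < φ₂ r₀ := hpos₂ r₀ ⟨hr₀0, hr₀R⟩
  have hmle : g 0 ≤ g r₀ := hgmono ⟨le_rfl, hr₀0⟩ ⟨hr₀0, le_rfl⟩ hr₀0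
  have hg0 : 1 < g 0 := (one_lt_div h20).2 h0
  have hgr₀ : 1 < g r₀ := lt_of_lt_of_le hg0 hmle
  have : φ₂ r₀ < φ₁ r₀ := (one_lt_div h2r₀).1 hgr₀
  linarith
end
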